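/- Let f : ℝ^d → ℝ be μ-strongly convex, let g = (g_1, …, g_q) : ℝ^d → ℝ^q be componentwise convex, let A ∈ ℝ^{p×d}, b, v, v*, p̂ ∈ ℝ^p, z, z* ∈ ℝ^q, q̂ ∈ ℝ^q, ρ > 0. Define the dual function φ(u, y) = min_x [f(x) + ⟨u, A x − b − v*⟩ + ⟨y, g(x) − z*⟩] on ℝ^p × ℝ^q_{≥0}, and set ξ = (v − v*, z − z*) ∈ ℝ^{p+q}. Suppose x⁺ minimizes the augmented Lagrangian x ↦ f(x) + ⟨p̂, A x − b − v⟩ + (ρ/2)‖A x − b − v‖² + (1/(2ρ))‖[q̂ + ρ(g(x) − z)]_+‖² − (1/(2ρ))‖q̂‖², and set u⁺ = p̂ + ρ(A x⁺ − b − v), y⁺ = [q̂ + ρ(g(x⁺) − z)]_+. Then ζ⁺ = (u⁺, y⁺) is the unique minimizer over ζ ∈ ℝ^p × ℝ^q_{≥0} of ζ ↦ ⟨ξ, ζ⟩ − φ(ζ) + (1/(2ρ))‖ζ − (p̂, q̂)‖². -/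

import Mathlib

open RealInnerProductSpace Finset

/-- Componentwise projection onto the nonnegative orthant of `ℝ^q`. -/
noncomputable def posPart {q : ℕ} (w : EuclideanSpace ℝ (Fin q)) : EuclideanSpace ℝ (Fin q) :=
  WithLp.toLp 2 (fun l => max (w l) 0)

/-- The Lagrangian `x ↦ f x + ⟪u, A x − b − v*⟫ + ⟪y, g x − z*⟫` at `ζ = (u, y)`. -/
noncomputable def lagrangian {d p q : ℕ}
    (f : EuclideanSpace ℝ (Fin d) → ℝ)
    (g : EuclideanSpace ℝ (Fin d) → EuclideanSpace ℝ (Fin q))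
    (A : EuclideanSpace ℝ (Fin d) →L[ℝ] EuclideanSpace ℝ (Fin p))
    (b vstar : EuclideanSpace ℝ (Fin p)) (zstar : EuclideanSpace ℝ (Fin q))
    (ζ : EuclideanSpace ℝ (Fin p) × EuclideanSpace ℝ (Fin q))
    (x : EuclideanSpace ℝ (Fin d)) : ℝ :=
  f x + ⟪ζ.1, A x - b - vstar⟫ + ⟪ζ.2, g x - zstar⟫

lemma innerSum {n:ℕ} (a b : EuclideanSpace ℝ (Fin n)) : ⟪a,b⟫ = ∑ i, a i * b i := by
  simp [PiLp.inner_apply, RCLike.inner_apply, conj_trivial]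
  exact Finset.sum_congr rfl (fun i _ => mul_comm _ _)

lemma normSq {n:ℕ} (a : EuclideanSpace ℝ (Fin n)) : ‖a‖^2 = ∑ i, (a i)^2 := by
  rw [← real_inner_self_eq_norm_sq]
  rw [real_inner_self_eq_norm_sq, EuclideanSpace.norm_sq_eq]; simp [Real.norm_eq_abs, sq_abs]

lemma quadY0 (w y m : ℝ) (hy : 0 ≤ y) (hm : m = max w 0) :
    (y - m)^2 + (m - w)^2 ≤ (y - w)^2 := by
  rcases le_or_gt 0 w with h | h
  · rw [hm, max_eq_left h]; nlinarith
  · rw [hm, max_eq_right h.le]; nlinarith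

lemma quadU (ρ s ph u up : ℝ) (hρ : 0 < ρ) (h : up = ph + ρ*s) :
    -(up*s) + 1/(2*ρ)*(up-ph)^2 + 1/(2*ρ)*(u-up)^2 ≤ -(u*s) + 1/(2*ρ)*(u-ph)^2 := by
  apply le_of_eq
  subst h
  field_simp
  ring

lemma quadY (ρ s qh y yp : ℝ) (hρ : 0 < ρ) (hy : 0 ≤ y) (h : yp = max (qh + ρ*s) 0) :
    -(yp*s) + 1/(2*ρ)*(yp-qh)^2 + 1/(2*ρ)*(y-yp)^2 ≤ -(y*s) + 1/(2*ρ)*(y-qh)^2 := by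
  have key : (y - yp)^2 + (yp - (qh + ρ*s))^2 ≤ (y - (qh + ρ*s))^2 := quadY0 _ _ _ hy h
  rw [← sub_nonneg]
  have e : -(y*s) + 1/(2*ρ)*(y-qh)^2 - (-(yp*s) + 1/(2*ρ)*(yp-qh)^2 + 1/(2*ρ)*(y-yp)^2)
      = 1/(2*ρ) * ((y-(qh+ρ*s))^2 - ((y - yp)^2 + (yp-(qh+ρ*s))^2)) := by
    field_simp
    ring
  rw [e]
  exact mul_nonneg (by positivity) (by linarith)

lemma coordY (ρ t c gt a b : ℝ) (hρ : 0 < ρ) (hgt : gt ≤ (1-t)*a + t*b) :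
    (max (c + ρ*gt) 0)^2
      ≤ (max (c+ρ*a) 0)^2 + 2*ρ*t*(max (c+ρ*a) 0)*(b-a) + ρ^2*t^2*(b-a)^2 := by
  set M := max (c+ρ*a) 0 with hM
  have hM0 : 0 ≤ M := le_max_right _ _
  have hMa : c + ρ*a ≤ M := le_max_left _ _
  have hle : c + ρ*gt ≤ M + ρ*t*(b-a) := by nlinarith
  rcases le_or_gt 0 (M + ρ*t*(b-a)) with h | h
  · have h1 : max (c+ρ*gt) 0 ≤ M + ρ*t*(b-a) := max_le hle h
    have h0 : 0 ≤ max (c+ρ*gt) 0 := le_max_right _ _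
    nlinarith
  · have h2 : max (c+ρ*gt) 0 = 0 := max_eq_right (by linarith)
    rw [h2]; nlinarith

lemma limit_lemma (Δ K : ℝ) (hK : 0 ≤ K)
    (h : ∀ t:ℝ, 0 < t → t ≤ 1 → 0 ≤ t*Δ + t^2*K) : 0 ≤ Δ := by
  by_contra hneg
  push_neg at hneg
  have hd : 0 < -Δ/(2*(K+1)) := div_pos (by linarith) (by linarith)
  set t := min 1 (-Δ/(2*(K+1))) with ht
  have ht0 : 0 < t := lt_min one_pos hd
  have ht1 : t ≤ 1 := min_le_left _ _
  have h2 : t ≤ -Δ/(2*(K+1)) := min_le_right _ _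
  have hKt : t*K ≤ -Δ/2 := by
    have h3 : t*K ≤ (-Δ/(2*(K+1)))*K := mul_le_mul_of_nonneg_right h2 hK
    have h4 : (-Δ/(2*(K+1)))*K ≤ -Δ/2 := by
      rw [div_mul_eq_mul_div, div_le_div_iff₀ (by linarith) (by norm_num)]
      nlinarith
    linarith
  have h5 := h t ht0 ht1
  nlinarith [mul_le_mul_of_nonneg_left hKt ht0.le, mul_pos ht0 (show (0:ℝ) < -Δ by linarith)]

lemma f_segment {d : ℕ} (μ : ℝ) (hμ : 0 < μ) (f : EuclideanSpace ℝ (Fin d) → ℝ)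
    (hf : ConvexOn ℝ Set.univ (fun x => f x - μ / 2 * ‖x‖ ^ 2))
    (xp x : EuclideanSpace ℝ (Fin d)) (t : ℝ) (ht0 : 0 ≤ t) (ht1 : t ≤ 1) :
    f ((1-t) • xp + t • x) ≤ (1-t) * f xp + t * f x := by
  have h1 := hf.2 (Set.mem_univ xp) (Set.mem_univ x) (by linarith : (0:ℝ) ≤ 1-t) ht0 (by ring)
  simp only [smul_eq_mul] at h1
  have e1 : ‖(1-t) • xp + t • x‖^2
      = (1-t)^2*‖xp‖^2 + 2*((1-t)*t*⟪xp,x⟫) + t^2*‖x‖^2 := by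
    rw [norm_add_sq_real, real_inner_smul_left, real_inner_smul_right, norm_smul, norm_smul,
      Real.norm_eq_abs, Real.norm_eq_abs, abs_of_nonneg (by linarith : (0:ℝ) ≤ 1-t),
      abs_of_nonneg ht0]
    ring
  have e2 : ‖xp - x‖^2 = ‖xp‖^2 - 2*⟪xp,x⟫ + ‖x‖^2 := norm_sub_sq_real xp x
  have hn : ‖(1-t) • xp + t • x‖^2 ≤ (1-t)*‖xp‖^2 + t*‖x‖^2 := by
    nlinarith [sq_nonneg ‖xp - x‖, mul_nonneg (mul_nonneg (by linarith : (0:ℝ) ≤ 1-t) ht0) (sq_nonneg ‖xp - x‖)]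
  nlinarith [mul_le_mul_of_nonneg_left hn (by linarith : (0:ℝ) ≤ μ/2)]

set_option maxHeartbeats 2000000 in
lemma key_min {d p q : ℕ} (μ ρ : ℝ) (hμ : 0 < μ) (hρ : 0 < ρ)
    (f : EuclideanSpace ℝ (Fin d) → ℝ)
    (hf : ConvexOn ℝ Set.univ (fun x => f x - μ / 2 * ‖x‖ ^ 2))
    (g : EuclideanSpace ℝ (Fin d) → EuclideanSpace ℝ (Fin q))
    (hg : ∀ l, ConvexOn ℝ Set.univ (fun x => g x l))
    (A : EuclideanSpace ℝ (Fin d) →L[ℝ] EuclideanSpace ℝ (Fin p))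
    (b v vstar phat : EuclideanSpace ℝ (Fin p))
    (z zstar qhat : EuclideanSpace ℝ (Fin q))
    (xplus : EuclideanSpace ℝ (Fin d))
    (hxplus : ∀ w : EuclideanSpace ℝ (Fin d),
      f xplus + ⟪phat, A xplus - b - v⟫ + ρ / 2 * ‖A xplus - b - v‖ ^ 2
          + 1 / (2 * ρ) * ‖posPart (qhat + ρ • (g xplus - z))‖ ^ 2
          - 1 / (2 * ρ) * ‖qhat‖ ^ 2
        ≤ f w + ⟪phat, A w - b - v⟫ + ρ / 2 * ‖A w - b - v‖ ^ 2
          + 1 / (2 * ρ) * ‖posPart (qhat + ρ • (g w - z))‖ ^ 2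
          - 1 / (2 * ρ) * ‖qhat‖ ^ 2)
    (uplus : EuclideanSpace ℝ (Fin p)) (yplus : EuclideanSpace ℝ (Fin q))
    (huplus : uplus = phat + ρ • (A xplus - b - v))
    (hyplus : yplus = posPart (qhat + ρ • (g xplus - z)))
    (x : EuclideanSpace ℝ (Fin d)) :
    lagrangian f g A b vstar zstar (uplus, yplus) xplus
      ≤ lagrangian f g A b vstar zstar (uplus, yplus) x := by
  have hΔ0 : 0 ≤ f x - f xplus + ⟪uplus, A x - A xplus⟫ + ⟪yplus, g x - g xplus⟫ := by
    apply limit_lemma _ (ρ/2*‖A x - A xplus‖^2 + ρ/2*‖g x - g xplus‖^2) (by positivity)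
    intro t ht0 ht1
    set xt := (1-t) • xplus + t • x with hxt
    have hAL := hxplus xt
    rw [← hyplus] at hAL
    -- (i) convexity of f
    have hfc : f xt ≤ (1-t) * f xplus + t * f x := f_segment μ hμ f hf xplus x t ht0.le ht1
    -- (ii) linear part
    have hst : A xt - b - v = (A xplus - b - v) + t • (A x - A xplus) := by
      rw [hxt, map_add, map_smul, map_smul, sub_smul, one_smul, smul_sub]
      abel
    have hinner : ⟪phat, A xt - b - v⟫ = ⟪phat, A xplus - b - v⟫ + t*⟪phat, A x - A xplus⟫ := by
      rw [hst, inner_add_right, real_inner_smul_right]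
    have hnorm2 : ρ/2*‖A xt - b - v‖^2
        = ρ/2*‖A xplus - b - v‖^2 + ρ*(t*⟪A xplus - b - v, A x - A xplus⟫)
          + t^2*(ρ/2*‖A x - A xplus‖^2) := by
      rw [hst, norm_add_sq_real, real_inner_smul_right, norm_smul, Real.norm_eq_abs, mul_pow,
        sq_abs]
      ring
    have hu2 : t*⟪uplus, A x - A xplus⟫
        = t*⟪phat, A x - A xplus⟫ + ρ*(t*⟪A xplus - b - v, A x - A xplus⟫) := by
      rw [huplus, inner_add_left, real_inner_smul_left]
      ring
    -- (iii) posPart term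
    have hsum : ‖posPart (qhat + ρ•(g xt - z))‖^2
        ≤ ‖yplus‖^2 + 2*ρ*t*⟪yplus, g x - g xplus⟫ + ρ^2*t^2*‖g x - g xplus‖^2 := by
      rw [normSq, normSq, innerSum, normSq, Finset.mul_sum, Finset.mul_sum,
        ← Finset.sum_add_distrib, ← Finset.sum_add_distrib]
      apply Finset.sum_le_sum
      intro l _
      have hgl := (hg l).2 (Set.mem_univ xplus) (Set.mem_univ x)
        (by linarith : (0:ℝ) ≤ 1-t) ht0.le (by ring)
      simp only [smul_eq_mul] at hgl
      have hgt : g xt l - z l ≤ (1-t)*(g xplus l - z l) + t*(g x l - z l) := by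
        have e : (1-t)*(g xplus l - z l) + t*(g x l - z l)
            = ((1-t)*g xplus l + t*g x l) - z l := by ring
        rw [e]
        have : g xt l ≤ (1-t)*g xplus l + t*g x l := hgl
        linarith
      have hc := coordY ρ t (qhat l) (g xt l - z l) (g xplus l - z l) (g x l - z l) hρ hgt
      have hyl : yplus l = max (qhat l + ρ*(g xplus l - z l)) 0 := by
        rw [hyplus]; simp [_root_.posPart]
      have happ : _root_.posPart (qhat + ρ•(g xt - z)) l = max (qhat l + ρ*(g xt l - z l)) 0 := by
        simp [_root_.posPart]
      have hgsub : (g x - g xplus) l = g x l - g xplus l := by simp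
      rw [happ, hgsub, hyl]
      nlinarith [hc]
    have hy_le : 1/(2*ρ)*‖posPart (qhat + ρ•(g xt - z))‖^2
        ≤ 1/(2*ρ)*‖yplus‖^2 + t*⟪yplus, g x - g xplus⟫ + t^2*(ρ/2*‖g x - g xplus‖^2) := by
      have h1 := mul_le_mul_of_nonneg_left hsum (le_of_lt (by positivity : (0:ℝ) < 1/(2*ρ)))
      have e : 1/(2*ρ)*(‖yplus‖^2 + 2*ρ*t*⟪yplus, g x - g xplus⟫ + ρ^2*t^2*‖g x - g xplus‖^2)
          = 1/(2*ρ)*‖yplus‖^2 + t*⟪yplus, g x - g xplus⟫ + t^2*(ρ/2*‖g x - g xplus‖^2) := by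
        field_simp
      linarith [h1, e.le, e.ge]
    linarith [hAL, hfc, hinner, hnorm2, hu2, hy_le]
  have e1 : ⟪uplus, A x - b - vstar⟫ - ⟪uplus, A xplus - b - vstar⟫ = ⟪uplus, A x - A xplus⟫ := by
    rw [← inner_sub_right]; congr 1; abel
  have e2 : ⟪yplus, g x - zstar⟫ - ⟪yplus, g xplus - zstar⟫ = ⟪yplus, g x - g xplus⟫ := by
    rw [← inner_sub_right]; congr 1; abel
  simp only [lagrangian]
  linarith [hΔ0, e1, e2]

set_option maxHeartbeats 4000000 in
/-- The augmented Lagrangian step equals a proximal maximization step on the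
dual function: if `x⁺` minimizes the augmented Lagrangian and `u⁺ = p̂ + ρ(A x⁺ − b − v)`,
`y⁺ = [q̂ + ρ(g(x⁺) − z)]₊`, then `ζ⁺ = (u⁺, y⁺)` is the unique minimizer over
`ℝ^p × ℝ^q_{≥0}` of `ζ ↦ ⟪ξ, ζ⟫ − φ(ζ) + (1/(2ρ))‖ζ − (p̂, q̂)‖²`, where
`ξ = (v − v*, z − z*)` and `φ(ζ) = min_x [f x + ⟪u, A x − b − v*⟫ + ⟪y, g x − z*⟫]`. -/
theorem augmented_lagrangian_step_is_dual_proximal_step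
    (d p q : ℕ) (μ ρ : ℝ) (hμ : 0 < μ) (hρ : 0 < ρ)
    (f : EuclideanSpace ℝ (Fin d) → ℝ)
    (hf : ConvexOn ℝ Set.univ (fun x => f x - μ / 2 * ‖x‖ ^ 2))
    (g : EuclideanSpace ℝ (Fin d) → EuclideanSpace ℝ (Fin q))
    (hg : ∀ l, ConvexOn ℝ Set.univ (fun x => g x l))
    (A : EuclideanSpace ℝ (Fin d) →L[ℝ] EuclideanSpace ℝ (Fin p))
    (b v vstar phat : EuclideanSpace ℝ (Fin p))
    (z zstar qhat : EuclideanSpace ℝ (Fin q))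
    (D : Set (EuclideanSpace ℝ (Fin p) × EuclideanSpace ℝ (Fin q)))
    (hD : D = {ζ | ∀ l, 0 ≤ ζ.2 l})
    -- `xm` selects, for each admissible `ζ`, a minimizer of the ordinary Lagrangian,
    -- so that `φ ζ = lagrangian f g A b vstar zstar ζ (xm ζ)` is the dual function
    (xm : (EuclideanSpace ℝ (Fin p) × EuclideanSpace ℝ (Fin q)) → EuclideanSpace ℝ (Fin d))
    (hxm : ∀ ζ ∈ D, ∀ w,
      lagrangian f g A b vstar zstar ζ (xm ζ) ≤ lagrangian f g A b vstar zstar ζ w)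
    (xplus : EuclideanSpace ℝ (Fin d))
    (hxplus : ∀ w : EuclideanSpace ℝ (Fin d),
      f xplus + ⟪phat, A xplus - b - v⟫ + ρ / 2 * ‖A xplus - b - v‖ ^ 2
          + 1 / (2 * ρ) * ‖posPart (qhat + ρ • (g xplus - z))‖ ^ 2
          - 1 / (2 * ρ) * ‖qhat‖ ^ 2
        ≤ f w + ⟪phat, A w - b - v⟫ + ρ / 2 * ‖A w - b - v‖ ^ 2
          + 1 / (2 * ρ) * ‖posPart (qhat + ρ • (g w - z))‖ ^ 2
          - 1 / (2 * ρ) * ‖qhat‖ ^ 2)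
    (uplus : EuclideanSpace ℝ (Fin p)) (yplus : EuclideanSpace ℝ (Fin q))
    (huplus : uplus = phat + ρ • (A xplus - b - v))
    (hyplus : yplus = posPart (qhat + ρ • (g xplus - z))) :
    (uplus, yplus) ∈ D ∧
    ∀ ζ ∈ D, ζ ≠ (uplus, yplus) →
      ⟪v - vstar, uplus⟫ + ⟪z - zstar, yplus⟫
          - lagrangian f g A b vstar zstar (uplus, yplus) (xm (uplus, yplus))
          + 1 / (2 * ρ) * (‖uplus - phat‖ ^ 2 + ‖yplus - qhat‖ ^ 2)
        < ⟪v - vstar, ζ.1⟫ + ⟪z - zstar, ζ.2⟫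
          - lagrangian f g A b vstar zstar ζ (xm ζ)
          + 1 / (2 * ρ) * (‖ζ.1 - phat‖ ^ 2 + ‖ζ.2 - qhat‖ ^ 2) := by
  have hmem : (uplus, yplus) ∈ D := by
    rw [hD]; intro l; rw [hyplus]; exact le_max_right _ _
  refine ⟨hmem, ?_⟩
  intro ζ hζ hne
  have hy0 : ∀ l, 0 ≤ ζ.2 l := by rw [hD] at hζ; exact hζ
  have hkey := key_min μ ρ hμ hρ f hf g hg A b v vstar phat z zstar qhat xplus hxplus
    uplus yplus huplus hyplus
  have hLp : lagrangian f g A b vstar zstar (uplus,yplus) (xm (uplus,yplus))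
      = lagrangian f g A b vstar zstar (uplus,yplus) xplus :=
    le_antisymm (hxm _ hmem xplus) (hkey _)
  have hLz : lagrangian f g A b vstar zstar ζ (xm ζ)
      ≤ lagrangian f g A b vstar zstar ζ xplus := hxm ζ hζ xplus
  have hupk : ∀ k, uplus k = phat k + ρ * (A xplus - b - v) k := by
    intro k; rw [huplus]; simp
  have hypk : ∀ l, yplus l = max (qhat l + ρ * (g xplus - z) l) 0 := by
    intro l; rw [hyplus]; simp [_root_.posPart]
  have hUv : -⟪uplus, A xplus - b - v⟫ + 1/(2*ρ)*‖uplus - phat‖^2 + 1/(2*ρ)*‖ζ.1 - uplus‖^2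
      ≤ -⟪ζ.1, A xplus - b - v⟫ + 1/(2*ρ)*‖ζ.1 - phat‖^2 := by
    rw [innerSum, innerSum, normSq, normSq, normSq, Finset.mul_sum, Finset.mul_sum,
      Finset.mul_sum, ← Finset.sum_neg_distrib, ← Finset.sum_neg_distrib,
      ← Finset.sum_add_distrib, ← Finset.sum_add_distrib, ← Finset.sum_add_distrib]
    apply Finset.sum_le_sum
    intro k _
    simpa using quadU ρ ((A xplus - b - v) k) (phat k) (ζ.1 k) (uplus k) hρ (hupk k)
  have hYv : -⟪yplus, g xplus - z⟫ + 1/(2*ρ)*‖yplus - qhat‖^2 + 1/(2*ρ)*‖ζ.2 - yplus‖^2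
      ≤ -⟪ζ.2, g xplus - z⟫ + 1/(2*ρ)*‖ζ.2 - qhat‖^2 := by
    rw [innerSum, innerSum, normSq, normSq, normSq, Finset.mul_sum, Finset.mul_sum,
      Finset.mul_sum, ← Finset.sum_neg_distrib, ← Finset.sum_neg_distrib,
      ← Finset.sum_add_distrib, ← Finset.sum_add_distrib, ← Finset.sum_add_distrib]
    apply Finset.sum_le_sum
    intro l _
    simpa using quadY ρ ((g xplus - z) l) (qhat l) (ζ.2 l) (yplus l) hρ (hy0 l) (hypk l)
  have EU1 : ⟪v - vstar, uplus⟫ = ⟪uplus, A xplus - b - vstar⟫ - ⟪uplus, A xplus - b - v⟫ := by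
    rw [← inner_sub_right, real_inner_comm]
    congr 1; abel
  have EU2 : ⟪v - vstar, ζ.1⟫ = ⟪ζ.1, A xplus - b - vstar⟫ - ⟪ζ.1, A xplus - b - v⟫ := by
    rw [← inner_sub_right, real_inner_comm]
    congr 1; abel
  have EY1 : ⟪z - zstar, yplus⟫ = ⟪yplus, g xplus - zstar⟫ - ⟪yplus, g xplus - z⟫ := by
    rw [← inner_sub_right, real_inner_comm]
    congr 1; abel
  have EY2 : ⟪z - zstar, ζ.2⟫ = ⟪ζ.2, g xplus - zstar⟫ - ⟪ζ.2, g xplus - z⟫ := by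
    rw [← inner_sub_right, real_inner_comm]
    congr 1; abel
  have hne2 : ζ.1 ≠ uplus ∨ ζ.2 ≠ yplus := by
    by_contra hcon
    push_neg at hcon
    exact hne (Prod.ext hcon.1 hcon.2)
  have strict : 0 < 1/(2*ρ)*‖ζ.1 - uplus‖^2 + 1/(2*ρ)*‖ζ.2 - yplus‖^2 := by
    have h1 : 0 ≤ ‖ζ.1 - uplus‖^2 := sq_nonneg _
    have h2 : 0 ≤ ‖ζ.2 - yplus‖^2 := sq_nonneg _
    have h3 : 0 < ‖ζ.1 - uplus‖^2 + ‖ζ.2 - yplus‖^2 := by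
      rcases hne2 with h | h
      · have : 0 < ‖ζ.1 - uplus‖ := by rwa [norm_sub_pos_iff]
        nlinarith
      · have : 0 < ‖ζ.2 - yplus‖ := by rwa [norm_sub_pos_iff]
        nlinarith
    have h4 : (0:ℝ) < 1/(2*ρ) := by positivity
    nlinarith
  rw [hLp]
  simp only [lagrangian] at hLz ⊢
  linarith [hUv, hYv, hLz, strict, EU1, EU2, EY1, EY2]
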